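/- For all positive integers a, b, c, let λ be a 2-factor of H_{a,b,c} and let μ be a perfect matching of H_{2a,2b,2c} with Ψ(μ) = λ. If λ is the multiset union of two perfect matchings of H_{a,b,c} corresponding to 3D Young diagrams σ₁ and σ₂ contained in the box B_{a,b,c}, then n_p(π(μ)) = |σ₁| + |σ₂|, where π(μ) is the 3D Young diagram in the box B_{2a,2b,2c} corresponding to μ and n_p(π(μ)) is the number of its elements (i,j,k) with i ≡ k and j ≡ k modulo 2. In particular, n_p(π(μ)) depends only on λ. (This is a gauge-free form of the paper's Lemma 3: w_{p,1,1,1}(μ) corresponds to w_p(λ).) -/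

import Mathlib

open scoped Classical

/-- Vertices of the hexagonal mesh `H_{a,b,c}`: `true` = upward triangle
(coordinates summing to `a+b+c-1`), `false` = downward triangle
(coordinates summing to `a+b+c-2`).  The three coordinates measure the
position of the unit triangle in the three lattice directions of the
dissection of the semiregular hexagon with sides `a,b,c,a,b,c` into unit
equilateral triangles. -/
def HexV (a b c : ℕ) : Type :=
  {v : Bool × Fin (a + b + c) × Fin (a + b + c) × Fin (a + b + c) //
    (v.2.1 : ℕ) < a + b ∧ (v.2.2.1 : ℕ) < b + c ∧ (v.2.2.2 : ℕ) < a + c ∧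
    (v.2.1 : ℕ) + (v.2.2.1 : ℕ) + (v.2.2.2 : ℕ) + 2 = a + b + c + cond v.1 1 0}

namespace HexV

variable {a b c : ℕ}

instance : DecidableEq (HexV a b c) := by unfold HexV; infer_instance
instance : Fintype (HexV a b c) := by unfold HexV; infer_instance

/-- Is the vertex an upward triangle? -/
def up (v : HexV a b c) : Bool := v.1.1
/-- First coordinate. -/
def I (v : HexV a b c) : ℕ := v.1.2.1
/-- Second coordinate. -/
def J (v : HexV a b c) : ℕ := v.1.2.2.1
/-- Third coordinate. -/
def K (v : HexV a b c) : ℕ := v.1.2.2.2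

end HexV

/-- The hexagonal mesh `H_{a,b,c}` (the bipartite adjacency graph of the unit
triangles of the hexagon): an upward and a downward triangle are adjacent
(share an edge) iff the downward one's coordinates are componentwise at most
the upward one's. -/
def hexGraph (a b c : ℕ) : SimpleGraph (HexV a b c) where
  Adj u w :=
    (u.up = true ∧ w.up = false ∧ w.I ≤ u.I ∧ w.J ≤ u.J ∧ w.K ≤ u.K) ∨
    (w.up = true ∧ u.up = false ∧ u.I ≤ w.I ∧ u.J ≤ w.J ∧ u.K ≤ w.K)
  symm := ⟨by intro u w h; tauto⟩
  loopless := ⟨by intro u h; rcases h with ⟨h1, h2, -⟩ | ⟨h1, h2, -⟩ <;> simp [h1] at h2⟩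

/-- A 3D Young diagram: a finite downward-closed subset of `ℕ³`. -/
def IsYoungDiagram3D (π : Finset (ℕ × ℕ × ℕ)) : Prop :=
  ∀ p ∈ π, ∀ q : ℕ × ℕ × ℕ, q.1 ≤ p.1 → q.2.1 ≤ p.2.1 → q.2.2 ≤ p.2.2 → q ∈ π

/-- Containment in the box `B_{a,b,c} = {0,…,a−1} × {0,…,b−1} × {0,…,c−1}`. -/
def InBox (a b c : ℕ) (π : Finset (ℕ × ℕ × ℕ)) : Prop :=
  ∀ p ∈ π, p.1 < a ∧ p.2.1 < b ∧ p.2.2 < c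

/-- Number of boxes of `π` in the column over `(x, y)` (in the `z`-direction). -/
def colZ (π : Finset (ℕ × ℕ × ℕ)) (x y : ℕ) : ℕ :=
  (π.filter fun p => p.1 = x ∧ p.2.1 = y).card

/-- Number of boxes of `π` in the column over `(y, z)` (in the `x`-direction). -/
def colX (π : Finset (ℕ × ℕ × ℕ)) (y z : ℕ) : ℕ :=
  (π.filter fun p => p.2.1 = y ∧ p.2.2 = z).card

/-- Number of boxes of `π` in the column over `(x, z)` (in the `y`-direction). -/
def colY (π : Finset (ℕ × ℕ × ℕ)) (x z : ℕ) : ℕ :=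
  (π.filter fun p => p.1 = x ∧ p.2.2 = z).card

/-- `u` (upward) and `d` (downward) form one of the dimers of the matching
associated to the 3D diagram `π`: the three cases correspond to the top,
`x`- and `y`-faces of the surface of `π` viewed under isometric projection
(each visible rhombic face of the diagram covers one upward and one downward
triangle of the hexagon). -/
def IsDimerOf (a b c : ℕ) (π : Finset (ℕ × ℕ × ℕ)) (u d : HexV a b c) : Prop :=
  (∃ x < a, ∃ y < b,
      u.I = b + x - y ∧ u.J = c + y - colZ π x y ∧ u.K = a - 1 - x + colZ π x y ∧
      d.I + 1 = u.I ∧ d.J = u.J ∧ d.K = u.K) ∨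
  (∃ y < b, ∃ z < c,
      u.I = b + colX π y z - y - 1 ∧ u.J = c + y - z ∧ u.K = a + z - colX π y z ∧
      d.I = u.I ∧ d.J + 1 = u.J ∧ d.K = u.K) ∨
  (∃ x < a, ∃ z < c,
      u.I = b + x - colY π x z ∧ u.J = c + colY π x z - z - 1 ∧ u.K = a + z - x ∧
      d.I = u.I ∧ d.J = u.J ∧ d.K + 1 = u.K)

/-- The matching of `H_{a,b,c}` associated to a 3D Young diagram `π`
contained in `B_{a,b,c}`, as a (spanning) subgraph of `hexGraph a b c`. -/
def matchingOf (a b c : ℕ) (π : Finset (ℕ × ℕ × ℕ)) : (hexGraph a b c).Subgraph where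
  verts := Set.univ
  Adj u w := (u.up = true ∧ w.up = false ∧ IsDimerOf a b c π u w) ∨
    (w.up = true ∧ u.up = false ∧ IsDimerOf a b c π w u)
  adj_sub := by
    rintro u w (⟨hu, hw, h⟩ | ⟨hw, hu, h⟩)
    · exact Or.inl ⟨hu, hw, by
        rcases h with ⟨x, -, y, -, h⟩ | ⟨y, -, z, -, h⟩ | ⟨x, -, z, -, h⟩ <;> omega⟩
    · exact Or.inr ⟨hw, hu, by
        rcases h with ⟨x, -, y, -, h⟩ | ⟨y, -, z, -, h⟩ | ⟨x, -, z, -, h⟩ <;> omega⟩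
  edge_vert := by intro _ _ _; trivial
  symm := ⟨by intro u w h; tauto⟩

/-- A propeller center of `H_{2a,2b,2c}`: a vertex all of whose coordinates
have the same parity.  The propeller consists of this vertex together with
its three incident edges; the propellers are pairwise vertex-disjoint and
cover all vertices, and contracting each to a point yields `H_{a,b,c}` with
every edge doubled. -/
def IsCenter {a b c : ℕ} (v : HexV a b c) : Prop :=
  v.I % 2 = v.J % 2 ∧ v.J % 2 = v.K % 2

/-- An edge of one of the propellers, i.e. an edge incident to a center. -/
def IsPropellerEdge {a b c : ℕ} (e : Sym2 (HexV a b c)) : Prop :=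
  ∃ v ∈ e, IsCenter v

/-- Auxiliary arithmetic lemma for `hexSq`. -/
theorem hexSq_aux {a b c : ℕ} (fl : Bool) (i j k : ℕ)
    (h1 : i < 2 * a + 2 * b) (h2 : j < 2 * b + 2 * c) (h3 : k < 2 * a + 2 * c)
    (hs : i + j + k + 2 = 2 * a + 2 * b + 2 * c + cond fl 1 0) :
    i / 2 < a + b ∧ j / 2 < b + c ∧ k / 2 < a + c ∧
      i / 2 + j / 2 + k / 2 + 2
        = a + b + c + cond (decide (i % 2 + j % 2 + k % 2 ≤ 1)) 1 0 := by
  by_cases hp : i % 2 + j % 2 + k % 2 ≤ 1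
  · rw [decide_eq_true hp]
    cases fl <;> simp only [cond_true, cond_false] at hs ⊢ <;> omega
  · rw [decide_eq_false hp]
    cases fl <;> simp only [cond_true, cond_false] at hs ⊢ <;> omega

/-- The squishing map `ψ` on vertices, `H_{2a,2b,2c} → H_{a,b,c}`: halve all
coordinates (rounding down).  It maps each propeller (center and tips) onto
a single vertex of `H_{a,b,c}` and is two-to-one on non-propeller edges. -/
def hexSq (a b c : ℕ) (v : HexV (2 * a) (2 * b) (2 * c)) : HexV a b c :=
  have hv := v.2
  ⟨(decide ((v.1.2.1 : ℕ) % 2 + (v.1.2.2.1 : ℕ) % 2 + (v.1.2.2.2 : ℕ) % 2 ≤ 1),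
    ⟨(v.1.2.1 : ℕ) / 2, by omega⟩, ⟨(v.1.2.2.1 : ℕ) / 2, by omega⟩,
    ⟨(v.1.2.2.2 : ℕ) / 2, by omega⟩),
    hexSq_aux v.1.1 v.1.2.1 v.1.2.2.1 v.1.2.2.2 hv.1 hv.2.1 hv.2.2.1 hv.2.2.2⟩

/-- The squished multiset `Ψ(M)` of a subgraph `M` of `H_{2a,2b,2c}`, recorded
by its multiplicity function: `PsiCount a b c M E` is the number of
non-propeller edges of `M` which squish to the edge `E` of `H_{a,b,c}`. -/
noncomputable def PsiCount (a b c : ℕ) (M : (hexGraph (2 * a) (2 * b) (2 * c)).Subgraph)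
    (E : Sym2 (HexV a b c)) : ℕ :=
  Set.ncard {e | e ∈ M.edgeSet ∧ ¬IsPropellerEdge e ∧ Sym2.map (hexSq a b c) e = E}

/-- Number of boxes `(i,j,k)` of `π` with `i ≡ k` and `j ≡ k (mod 2)`
(colour `p` in the `ℤ₂ × ℤ₂` weighting). -/
def countP (π : Finset (ℕ × ℕ × ℕ)) : ℕ :=
  (π.filter fun p => (p.1 + p.2.2) % 2 = 0 ∧ (p.2.1 + p.2.2) % 2 = 0).card

open Finset in
lemma mem_iff_lt_colZ {π : Finset (ℕ × ℕ × ℕ)} (hY : IsYoungDiagram3D π) (x y k : ℕ) :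
    (x, y, k) ∈ π ↔ k < colZ π x y := by
  classical
  set T := π.filter (fun p => p.1 = x ∧ p.2.1 = y) with hT
  set K := T.image (fun p => p.2.2) with hK
  have hmemT : ∀ n : ℕ, (x, y, n) ∈ π ↔ (x, y, n) ∈ T := by
    intro n; simp [hT]
  have hmemK : ∀ n : ℕ, n ∈ K ↔ (x, y, n) ∈ π := by
    intro n
    constructor
    · rintro hn
      obtain ⟨p, hp, hpn⟩ := Finset.mem_image.1 hn
      obtain ⟨hp1, hp2, hp3⟩ := Finset.mem_filter.1 hp
      have : p = (x, y, n) := by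
        obtain ⟨p1, p2, p3⟩ := p
        simp_all
      exact this ▸ hp1
    · intro hn
      exact Finset.mem_image.2 ⟨(x, y, n), (hmemT n).1 hn, rfl⟩
  have hcard : K.card = T.card := by
    apply Finset.card_image_of_injOn
    intro p hp q hq hpq
    obtain ⟨-, hp2, hp3⟩ := Finset.mem_filter.1 hp
    obtain ⟨-, hq2, hq3⟩ := Finset.mem_filter.1 hq
    obtain ⟨p1, p2, p3⟩ := p; obtain ⟨q1, q2, q3⟩ := q
    simp_all
  have hdc : ∀ n ∈ K, ∀ j ≤ n, j ∈ K := by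
    intro n hn j hj
    exact (hmemK j).2 (hY _ ((hmemK n).1 hn) (x, y, j) le_rfl le_rfl hj)
  have hsub : K ⊆ Finset.range K.card := by
    intro n hn
    have : Finset.range (n + 1) ⊆ K := by
      intro j hj
      exact hdc n hn j (Nat.lt_succ_iff.1 (Finset.mem_range.1 hj))
    have := Finset.card_le_card this
    simp only [Finset.card_range] at this
    exact Finset.mem_range.2 this
  have hKeq : K = Finset.range K.card := by
    apply Finset.eq_of_subset_of_card_le hsub
    simp
  have hcol : colZ π x y = K.card := by rw [colZ, hcard]
  rw [hcol, ← hmemK k]; rw [hKeq]; simp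
lemma colZ_le {a b c : ℕ} {π : Finset (ℕ × ℕ × ℕ)} (hB : InBox a b c π) (x y : ℕ) :
    colZ π x y ≤ c := by
  classical
  have hsub : (π.filter (fun p => p.1 = x ∧ p.2.1 = y)).image (fun p => p.2.2)
      ⊆ Finset.range c := by
    intro n hn
    obtain ⟨p, hp, hpn⟩ := Finset.mem_image.1 hn
    exact Finset.mem_range.2 (hpn ▸ (hB p (Finset.mem_filter.1 hp).1).2.2)
  have hinj : ((π.filter (fun p => p.1 = x ∧ p.2.1 = y)).image (fun p => p.2.2)).card
      = (π.filter (fun p => p.1 = x ∧ p.2.1 = y)).card := by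
    apply Finset.card_image_of_injOn
    intro p hp q hq hpq
    obtain ⟨-, hp2, hp3⟩ := Finset.mem_filter.1 hp
    obtain ⟨-, hq2, hq3⟩ := Finset.mem_filter.1 hq
    obtain ⟨p1, p2, p3⟩ := p; obtain ⟨q1, q2, q3⟩ := q
    simp_all
  have := Finset.card_le_card hsub
  rw [hinj, Finset.card_range] at this
  exact this

lemma colZ_anti {π : Finset (ℕ × ℕ × ℕ)} (hY : IsYoungDiagram3D π) {x y x' y' : ℕ}
    (hx : x ≤ x') (hy : y ≤ y') : colZ π x' y' ≤ colZ π x y := by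
  by_contra h
  push_neg at h
  have h1 : (x', y', colZ π x y) ∈ π := (mem_iff_lt_colZ hY _ _ _).2 h
  have h2 : (x, y, colZ π x y) ∈ π := hY _ h1 (x, y, colZ π x y) hx hy le_rfl
  exact absurd ((mem_iff_lt_colZ hY _ _ _).1 h2) (lt_irrefl _)

open Finset in
lemma card_filter_eq_sum {A B C : ℕ} {π : Finset (ℕ × ℕ × ℕ)} (hY : IsYoungDiagram3D π)
    (hB : InBox A B C π) (P : ℕ × ℕ × ℕ → Prop) [DecidablePred P] :
    (π.filter P).card = ∑ q ∈ Finset.range A ×ˢ Finset.range B,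
      ((Finset.range (colZ π q.1 q.2)).filter (fun k => P (q.1, q.2, k))).card := by
  classical
  rw [Finset.card_eq_sum_card_fiberwise
    (f := fun p => (p.1, p.2.1)) (t := Finset.range A ×ˢ Finset.range B)
    (fun p hp => by
      have := hB p (Finset.mem_filter.1 hp).1
      exact Finset.mem_product.2 ⟨Finset.mem_range.2 this.1, Finset.mem_range.2 this.2.1⟩)]
  apply Finset.sum_congr rfl
  intro q hq
  apply Finset.card_bij (fun p _ => p.2.2)
  · rintro p hp
    obtain ⟨hp1, hp2⟩ := Finset.mem_filter.1 hp
    obtain ⟨hp3, hp4⟩ := Finset.mem_filter.1 hp1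
    obtain ⟨p1, p2, p3⟩ := p
    obtain ⟨q1, q2⟩ := q
    simp only [Prod.mk.injEq] at hp2
    obtain ⟨rfl, rfl⟩ := hp2
    simp only [Finset.mem_filter, Finset.mem_range]
    exact ⟨(mem_iff_lt_colZ hY _ _ _).1 hp3, hp4⟩
  · rintro p hp p' hp' hpp
    obtain ⟨hp1, hp2⟩ := Finset.mem_filter.1 hp
    obtain ⟨hp1', hp2'⟩ := Finset.mem_filter.1 hp'
    obtain ⟨p1, p2, p3⟩ := p; obtain ⟨q1, q2, q3⟩ := p'
    simp_all [Prod.ext_iff]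
  · intro k hk
    obtain ⟨hk1, hk2⟩ := Finset.mem_filter.1 hk
    refine ⟨(q.1, q.2, k), ?_, rfl⟩
    refine Finset.mem_filter.2 ⟨Finset.mem_filter.2 ⟨?_, hk2⟩, rfl⟩
    exact (mem_iff_lt_colZ hY _ _ _).2 (Finset.mem_range.1 hk1)

lemma count_parity (X Y h : ℕ) :
    ((Finset.range h).filter (fun k => (X + k) % 2 = 0 ∧ (Y + k) % 2 = 0)).card
      = if X % 2 = Y % 2 then (if X % 2 = 0 then (h + 1) / 2 else h / 2) else 0 := by
  induction h with
  | zero => simp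
  | succ n ih =>
    rw [Finset.range_add_one, Finset.filter_insert]
    by_cases hc : (X + n) % 2 = 0 ∧ (Y + n) % 2 = 0
    · rw [if_pos hc, Finset.card_insert_of_notMem (by simp)]
      rw [ih]
      split_ifs <;> omega
    · rw [if_neg hc, ih]
      split_ifs <;> omega
/-- The up vertex of the top dimer over column `(x,y)` at height `h`. -/
def topU (a b c x y h : ℕ) (hx : x < a) (hy : y < b) (hh : h ≤ c) : HexV a b c :=
  ⟨(true, ⟨b + x - y, by omega⟩, ⟨c + y - h, by omega⟩, ⟨a - 1 - x + h, by omega⟩), by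
    refine ⟨?_, ?_, ?_, ?_⟩ <;> simp only [cond_true] <;> omega⟩

/-- The down vertex of the top dimer over column `(x,y)` at height `h`. -/
def topD (a b c x y h : ℕ) (hx : x < a) (hy : y < b) (hh : h ≤ c) : HexV a b c :=
  ⟨(false, ⟨b + x - y - 1, by omega⟩, ⟨c + y - h, by omega⟩, ⟨a - 1 - x + h, by omega⟩), by
    refine ⟨?_, ?_, ?_, ?_⟩ <;> simp only [cond_false] <;> omega⟩

@[simp] lemma topU_up {a b c x y h hx hy hh} : (topU a b c x y h hx hy hh).up = true := rfl
@[simp] lemma topU_I {a b c x y h hx hy hh} : (topU a b c x y h hx hy hh).I = b + x - y := rfl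
@[simp] lemma topU_J {a b c x y h hx hy hh} : (topU a b c x y h hx hy hh).J = c + y - h := rfl
@[simp] lemma topU_K {a b c x y h hx hy hh} : (topU a b c x y h hx hy hh).K = a - 1 - x + h := rfl
@[simp] lemma topD_up {a b c x y h hx hy hh} : (topD a b c x y h hx hy hh).up = false := rfl
@[simp] lemma topD_I {a b c x y h hx hy hh} : (topD a b c x y h hx hy hh).I = b + x - y - 1 := rfl
@[simp] lemma topD_J {a b c x y h hx hy hh} : (topD a b c x y h hx hy hh).J = c + y - h := rfl
@[simp] lemma topD_K {a b c x y h hx hy hh} : (topD a b c x y h hx hy hh).K = a - 1 - x + h := rfl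

@[simp] lemma hexSq_up {a b c : ℕ} (v : HexV (2 * a) (2 * b) (2 * c)) :
    (hexSq a b c v).up = decide (v.I % 2 + v.J % 2 + v.K % 2 ≤ 1) := rfl
@[simp] lemma hexSq_I {a b c : ℕ} (v : HexV (2 * a) (2 * b) (2 * c)) :
    (hexSq a b c v).I = v.I / 2 := rfl
@[simp] lemma hexSq_J {a b c : ℕ} (v : HexV (2 * a) (2 * b) (2 * c)) :
    (hexSq a b c v).J = v.J / 2 := rfl
@[simp] lemma hexSq_K {a b c : ℕ} (v : HexV (2 * a) (2 * b) (2 * c)) :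
    (hexSq a b c v).K = v.K / 2 := rfl

/-- Weight of an ordered pair of vertices: the `J`-coordinate of the up vertex
if the pair is a top-type dimer, `0` otherwise. -/
noncomputable def dimerWt {a b c : ℕ} (u d : HexV a b c) : ℕ :=
  if u.up = true ∧ d.up = false ∧ d.I + 1 = u.I ∧ d.J = u.J ∧ d.K = u.K then u.J else 0

/-- Weight of an edge: `J`-coordinate of the up vertex if top-type, else `0`. -/
noncomputable def edgeWt {a b c : ℕ} : Sym2 (HexV a b c) → ℕ :=
  Sym2.lift ⟨fun u w => dimerWt u w + dimerWt w u, fun u w => by dsimp; omega⟩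

lemma edgeWt_mk {a b c : ℕ} (u w : HexV a b c) :
    edgeWt s(u, w) = dimerWt u w + dimerWt w u := Sym2.lift_mk _ _ _

lemma edgeWt_pair {a b c : ℕ} {u w : HexV a b c} (h1 : u.up = true) (h2 : w.up = false)
    (h3 : w.I + 1 = u.I) (h4 : w.J = u.J) (h5 : w.K = u.K) : edgeWt s(u, w) = u.J := by
  rw [edgeWt_mk, dimerWt, if_pos ⟨h1, h2, h3, h4, h5⟩, dimerWt, if_neg]
  · omega
  · rintro ⟨hw, hu, -⟩; rw [h2] at hw; exact absurd hw (by simp)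

lemma edgeWt_eq_zero {a b c : ℕ} {u w : HexV a b c} (hI : u.I = w.I) : edgeWt s(u, w) = 0 := by
  rw [edgeWt_mk, dimerWt, dimerWt, if_neg (by omega), if_neg (by omega)]

lemma edgeWt_ne_zero {a b c : ℕ} {u w : HexV a b c} (h : edgeWt s(u, w) ≠ 0) :
    w.I + 1 = u.I ∨ u.I + 1 = w.I := by
  rw [edgeWt_mk, dimerWt, dimerWt] at h
  split_ifs at h with h1 h2 h2 <;> [exact Or.inl h1.2.2.1; exact Or.inl h1.2.2.1;
    exact Or.inr h2.2.2.1; exact absurd rfl h]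
lemma topE_adj {a b c : ℕ} {π : Finset (ℕ × ℕ × ℕ)} {x y : ℕ}
    (hx : x < a) (hy : y < b) (hh : colZ π x y ≤ c) :
    (matchingOf a b c π).Adj (topU a b c x y (colZ π x y) hx hy hh)
      (topD a b c x y (colZ π x y) hx hy hh) := by
  refine Or.inl ⟨rfl, rfl, Or.inl ⟨x, hx, y, hy, rfl, rfl, rfl, ?_, rfl, rfl⟩⟩
  simp only [topU_I, topD_I]
  omega

lemma dimer_I {a b c : ℕ} {π : Finset (ℕ × ℕ × ℕ)} {u w : HexV a b c}
    (h : IsDimerOf a b c π u w) : w.I = u.I ∨ w.I + 1 = u.I := by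
  rcases h with ⟨x, -, y, -, h⟩ | ⟨y, -, z, -, h⟩ | ⟨x, -, z, -, h⟩ <;> omega

lemma eq_topU {a b c x y h : ℕ} {hx : x < a} {hy : y < b} {hh : h ≤ c} {u : HexV a b c}
    (hup : u.up = true) (hI : u.I = b + x - y) (hJ : u.J = c + y - h)
    (hK : u.K = a - 1 - x + h) : u = topU a b c x y h hx hy hh := by
  obtain ⟨⟨f, i, j, k⟩, hv⟩ := u
  apply Subtype.ext
  simp only [HexV.up, HexV.I, HexV.J, HexV.K] at hup hI hJ hK
  simp only [topU, Prod.mk.injEq]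
  exact ⟨hup, Fin.ext hI, Fin.ext hJ, Fin.ext hK⟩

lemma eq_topD {a b c x y h : ℕ} {hx : x < a} {hy : y < b} {hh : h ≤ c} {u : HexV a b c}
    (hup : u.up = false) (hI : u.I = b + x - y - 1) (hJ : u.J = c + y - h)
    (hK : u.K = a - 1 - x + h) : u = topD a b c x y h hx hy hh := by
  obtain ⟨⟨f, i, j, k⟩, hv⟩ := u
  apply Subtype.ext
  simp only [HexV.up, HexV.I, HexV.J, HexV.K] at hup hI hJ hK
  simp only [topD, Prod.mk.injEq]
  exact ⟨hup, Fin.ext hI, Fin.ext hJ, Fin.ext hK⟩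

/-- Classification: an adjacency in the matching whose `I`-coordinates differ by one
(down-vertex `w` below up-vertex `u`) must be a top dimer. -/
lemma mem_case1 {a b c : ℕ} {π : Finset (ℕ × ℕ × ℕ)} (hB : InBox a b c π)
    {u w : HexV a b c} (hadj : (matchingOf a b c π).Adj u w) (hI : w.I + 1 = u.I) :
    ∃ x y, ∃ (hx : x < a) (hy : y < b),
      u = topU a b c x y (colZ π x y) hx hy (colZ_le hB x y) ∧
      w = topD a b c x y (colZ π x y) hx hy (colZ_le hB x y) := by
  rcases hadj with ⟨hu, hw, hd⟩ | ⟨hw, hu, hd⟩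
  · rcases hd with ⟨x, hx, y, hy, h1, h2, h3, h4, h5, h6⟩ | ⟨y, -, z, -, h⟩ | ⟨x, -, z, -, h⟩
    · exact ⟨x, y, hx, hy, eq_topU hu h1 h2 h3,
        eq_topD hw (by omega) (by omega) (by omega)⟩
    · omega
    · omega
  · rcases dimer_I hd with h | h <;> omega

lemma topE_inj {a b c : ℕ} {π : Finset (ℕ × ℕ × ℕ)} (hY : IsYoungDiagram3D π)
    {x y x' y' : ℕ} {hx : x < a} {hy : y < b} {hx' : x' < a} {hy' : y' < b}
    {hh : colZ π x y ≤ c} {hh' : colZ π x' y' ≤ c}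
    (heq : s(topU a b c x y (colZ π x y) hx hy hh, topD a b c x y (colZ π x y) hx hy hh)
      = s(topU a b c x' y' (colZ π x' y') hx' hy' hh',
          topD a b c x' y' (colZ π x' y') hx' hy' hh')) : x = x' ∧ y = y' := by
  rcases Sym2.eq_iff.1 heq with ⟨hU, -⟩ | ⟨hU, -⟩
  · have hI := congrArg HexV.I hU
    have hJ := congrArg HexV.J hU
    simp only [topU_I, topU_J] at hI hJ
    rcases le_total x x' with hxx | hxx
    · have hle : colZ π x' y' ≤ colZ π x y := colZ_anti hY hxx (by omega)
      omega
    · have hle : colZ π x y ≤ colZ π x' y' := colZ_anti hY hxx (by omega)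
      omega
  · have := congrArg HexV.up hU
    simp at this

lemma edgeWt_topE {a b c x y h : ℕ} {hx : x < a} {hy : y < b} {hh : h ≤ c} :
    edgeWt s(topU a b c x y h hx hy hh, topD a b c x y h hx hy hh) = c + y - h :=
  edgeWt_pair rfl rfl (by simp; omega) rfl rfl
open Finset in
/-- **Lemma A**: the weighted edge count of the matching of a diagram `σ`. -/
lemma sumA {a b c : ℕ} (ha : 0 < a) (hb : 0 < b) (hc : 0 < c) {σ : Finset (ℕ × ℕ × ℕ)}
    (hY : IsYoungDiagram3D σ) (hB : InBox a b c σ) :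
    (∑ E : Sym2 (HexV a b c),
        edgeWt E * (if E ∈ (matchingOf a b c σ).edgeSet then 1 else 0)) + σ.card
      = ∑ q ∈ Finset.range a ×ˢ Finset.range b, (c + q.2) := by
  classical
  have step1 : (∑ E : Sym2 (HexV a b c),
      edgeWt E * (if E ∈ (matchingOf a b c σ).edgeSet then 1 else 0))
      = ∑ E ∈ Finset.univ.filter (fun E => E ∈ (matchingOf a b c σ).edgeSet), edgeWt E := by
    rw [Finset.sum_filter]
    apply Finset.sum_congr rfl
    intro E _
    split_ifs <;> omega
  have step2 : ∑ q ∈ Finset.range a ×ˢ Finset.range b, (c + q.2 - colZ σ q.1 q.2)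
      = ∑ E ∈ Finset.univ.filter (fun E => E ∈ (matchingOf a b c σ).edgeSet), edgeWt E := by
    apply Finset.sum_bij_ne_zero (i := fun q hq _ =>
      s(topU a b c q.1 q.2 (colZ σ q.1 q.2)
          (Finset.mem_range.1 (Finset.mem_product.1 hq).1)
          (Finset.mem_range.1 (Finset.mem_product.1 hq).2) (colZ_le hB q.1 q.2),
        topD a b c q.1 q.2 (colZ σ q.1 q.2)
          (Finset.mem_range.1 (Finset.mem_product.1 hq).1)
          (Finset.mem_range.1 (Finset.mem_product.1 hq).2) (colZ_le hB q.1 q.2)))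
    · intro q hq hne
      simp only [Finset.mem_filter, Finset.mem_univ, true_and]
      exact SimpleGraph.Subgraph.mem_edgeSet.2 (topE_adj _ _ _)
    · intro q1 h11 h12 q2 h21 h22 heq
      obtain ⟨h1, h2⟩ := topE_inj hY heq
      exact Prod.ext h1 h2
    · intro E hE hWne
      rw [Finset.mem_filter] at hE
      induction E with
      | _ u w =>
        have hadj := SimpleGraph.Subgraph.mem_edgeSet.1 hE.2
        rcases edgeWt_ne_zero hWne with hIuw | hIuw
        · obtain ⟨x, y, hx, hy, hu, hw⟩ := mem_case1 hB hadj hIuw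
          refine ⟨(x, y), Finset.mem_product.2 ⟨Finset.mem_range.2 hx, Finset.mem_range.2 hy⟩,
            ?_, ?_⟩
          · have : edgeWt s(u, w) = u.J := by
              subst hu; subst hw
              exact edgeWt_pair rfl rfl (by simp; omega) rfl rfl
            have hJ : u.J = c + y - colZ σ x y := by subst hu; rfl
            simpa [← hJ, ← this] using hWne
          · rw [hu, hw]
        · obtain ⟨x, y, hx, hy, hu, hw⟩ := mem_case1 hB hadj.symm hIuw
          refine ⟨(x, y), Finset.mem_product.2 ⟨Finset.mem_range.2 hx, Finset.mem_range.2 hy⟩,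
            ?_, ?_⟩
          · have : edgeWt s(w, u) = w.J := by
              subst hu; subst hw
              exact edgeWt_pair rfl rfl (by simp; omega) rfl rfl
            rw [Sym2.eq_swap] at this
            have hJ : w.J = c + y - colZ σ x y := by subst hu; rfl
            simpa [← hJ, ← this] using hWne
          · rw [hu, hw, Sym2.eq_swap]
    · intro q hq hne
      rw [edgeWt_topE]
  rw [step1, ← step2]
  have hcard : σ.card = ∑ q ∈ Finset.range a ×ˢ Finset.range b, colZ σ q.1 q.2 := by
    have := card_filter_eq_sum (A := a) (B := b) (C := c) hY hB (fun _ => True)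
    simpa using this
  rw [hcard, ← Finset.sum_add_distrib]
  apply Finset.sum_congr rfl
  intro q hq
  have := colZ_le hB q.1 q.2
  omega
lemma edgeWt_sq_topE {a b c X Y h : ℕ} {hX : X < 2 * a} {hYb : Y < 2 * b} {hh : h ≤ 2 * c}
    (hpar : (X + Y) % 2 = 0) :
    edgeWt (Sym2.map (hexSq a b c)
      s(topU (2 * a) (2 * b) (2 * c) X Y h hX hYb hh,
        topD (2 * a) (2 * b) (2 * c) X Y h hX hYb hh)) = (2 * c + Y - h) / 2 := by
  rw [Sym2.map_pair_eq]
  rw [edgeWt_pair]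
  · simp only [hexSq_J, topU_J]
  · simp only [hexSq_up]; apply decide_eq_true; simp only [topU_I, topU_J, topU_K]
    omega
  · simp only [hexSq_up]; apply decide_eq_false; simp only [topD_I, topD_J, topD_K]
    omega
  · simp only [hexSq_I, topU_I, topD_I]
    omega
  · simp only [hexSq_J, topU_J, topD_J]
  · simp only [hexSq_K, topU_K, topD_K]

lemma not_prop_topE {a b c X Y h : ℕ} {hX : X < 2 * a} {hYb : Y < 2 * b} {hh : h ≤ 2 * c}
    (hpar : (X + Y) % 2 = 0) :
    ¬IsPropellerEdge s(topU (2 * a) (2 * b) (2 * c) X Y h hX hYb hh,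
        topD (2 * a) (2 * b) (2 * c) X Y h hX hYb hh) := by
  rintro ⟨v, hv, hc1, hc2⟩
  rcases Sym2.mem_iff.1 hv with rfl | rfl <;>
    simp only [HexV.I, HexV.J, HexV.K, topU, topD] at hc1 hc2 <;> omega

lemma even_of_not_prop {a b c X Y h : ℕ} {hX : X < 2 * a} {hYb : Y < 2 * b} {hh : h ≤ 2 * c}
    (hnp : ¬IsPropellerEdge s(topU (2 * a) (2 * b) (2 * c) X Y h hX hYb hh,
        topD (2 * a) (2 * b) (2 * c) X Y h hX hYb hh)) : (X + Y) % 2 = 0 := by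
  by_contra hodd
  apply hnp
  by_cases hJ : (2 * c + Y - h) % 2 = 1
  · exact ⟨_, Sym2.mem_mk_left _ _, by
      constructor <;> · show _ % 2 = _ % 2; simp only [topU_I, topU_J, topU_K]; omega⟩
  · exact ⟨_, Sym2.mem_mk_right _ _, by
      constructor <;> · show _ % 2 = _ % 2; simp only [topD_I, topD_J, topD_K]; omega⟩

lemma psiCount_eq (a b c : ℕ) (M : (hexGraph (2 * a) (2 * b) (2 * c)).Subgraph)
    (E : Sym2 (HexV a b c)) :
    PsiCount a b c M E = (Finset.univ.filter (fun e => e ∈ M.edgeSet ∧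
      ¬IsPropellerEdge e ∧ Sym2.map (hexSq a b c) e = E)).card := by
  rw [PsiCount, Set.ncard_eq_toFinset_card', Set.toFinset_setOf]
open Finset in
/-- **Lemma B**: the weighted edge count of the squished matching of `π`. -/
lemma sumB {a b c : ℕ} {π : Finset (ℕ × ℕ × ℕ)}
    (hY : IsYoungDiagram3D π) (hB : InBox (2 * a) (2 * b) (2 * c) π) :
    (∑ E : Sym2 (HexV a b c),
        edgeWt E * PsiCount a b c (matchingOf (2 * a) (2 * b) (2 * c) π) E) + countP π
      = ∑ q ∈ Finset.range (2 * a) ×ˢ Finset.range (2 * b),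
          (if (q.1 + q.2) % 2 = 0 then c + q.2 / 2 else 0) := by
  classical
  set M := matchingOf (2 * a) (2 * b) (2 * c) π with hM
  set ψ : Sym2 (HexV (2 * a) (2 * b) (2 * c)) → Sym2 (HexV a b c) :=
    Sym2.map (hexSq a b c) with hψ
  set t : Finset (Sym2 (HexV (2 * a) (2 * b) (2 * c))) :=
    Finset.univ.filter (fun e => e ∈ M.edgeSet ∧ ¬IsPropellerEdge e) with ht
  have step0 : (∑ E : Sym2 (HexV a b c), edgeWt E * PsiCount a b c M E)
      = ∑ e ∈ t, edgeWt (ψ e) := by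
    rw [← Finset.sum_fiberwise t ψ (fun e => edgeWt (ψ e))]
    apply Finset.sum_congr rfl
    intro E _
    rw [psiCount_eq]
    have hfil : Finset.univ.filter (fun e => e ∈ M.edgeSet ∧
        ¬IsPropellerEdge e ∧ ψ e = E) = t.filter (fun e => ψ e = E) := by
      rw [ht, Finset.filter_filter]
      apply Finset.filter_congr
      intro e _
      tauto
    rw [hfil, Finset.sum_congr rfl (fun e he => by rw [(Finset.mem_filter.1 he).2]),
      Finset.sum_const, smul_eq_mul, mul_comm]
  have step1 : ∑ q ∈ (Finset.range (2 * a) ×ˢ Finset.range (2 * b)).filter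
        (fun q => (q.1 + q.2) % 2 = 0), ((2 * c + q.2 - colZ π q.1 q.2) / 2)
      = ∑ e ∈ t, edgeWt (ψ e) := by
    apply Finset.sum_bij_ne_zero (i := fun q hq _ =>
      s(topU (2 * a) (2 * b) (2 * c) q.1 q.2 (colZ π q.1 q.2)
          (Finset.mem_range.1 (Finset.mem_product.1 (Finset.mem_filter.1 hq).1).1)
          (Finset.mem_range.1 (Finset.mem_product.1 (Finset.mem_filter.1 hq).1).2)
          (colZ_le hB q.1 q.2),
        topD (2 * a) (2 * b) (2 * c) q.1 q.2 (colZ π q.1 q.2)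
          (Finset.mem_range.1 (Finset.mem_product.1 (Finset.mem_filter.1 hq).1).1)
          (Finset.mem_range.1 (Finset.mem_product.1 (Finset.mem_filter.1 hq).1).2)
          (colZ_le hB q.1 q.2)))
    · intro q hq hne
      rw [ht, Finset.mem_filter]
      refine ⟨Finset.mem_univ _, SimpleGraph.Subgraph.mem_edgeSet.2 (topE_adj _ _ _),
        not_prop_topE (Finset.mem_filter.1 hq).2⟩
    · intro q1 h11 h12 q2 h21 h22 heq
      obtain ⟨h1, h2⟩ := topE_inj hY heq
      exact Prod.ext h1 h2
    · intro e he hWne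
      rw [ht, Finset.mem_filter] at he
      obtain ⟨-, heE, hnp⟩ := he
      induction e with
      | _ u w =>
        have hadj := SimpleGraph.Subgraph.mem_edgeSet.1 heE
        rw [hψ, Sym2.map_pair_eq] at hWne
        have hIne : u.I ≠ w.I := by
          rcases edgeWt_ne_zero hWne with hsq | hsq <;>
            · simp only [hexSq_I] at hsq; omega
        have hIrel : w.I + 1 = u.I ∨ u.I + 1 = w.I := by
          rcases hadj with ⟨-, -, hd⟩ | ⟨-, -, hd⟩
          · rcases dimer_I hd with h | h <;> omega
          · rcases dimer_I hd with h | h <;> omega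
        rcases hIrel with hIr | hIr
        · obtain ⟨X, Y, hX, hYb, hu, hw⟩ := mem_case1 hB hadj hIr
          subst hu; subst hw
          have heven : (X + Y) % 2 = 0 := even_of_not_prop hnp
          refine ⟨(X, Y), Finset.mem_filter.2
            ⟨Finset.mem_product.2 ⟨Finset.mem_range.2 hX, Finset.mem_range.2 hYb⟩, heven⟩,
            ?_, ?_⟩
          · show (2 * c + Y - colZ π X Y) / 2 ≠ 0
            rw [← edgeWt_sq_topE heven, Sym2.map_pair_eq]
            exact hWne
          · rfl
        · obtain ⟨X, Y, hX, hYb, hu, hw⟩ := mem_case1 hB hadj.symm hIr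
          subst hu; subst hw
          rw [Sym2.eq_swap] at hnp hWne ⊢
          have heven : (X + Y) % 2 = 0 := even_of_not_prop hnp
          refine ⟨(X, Y), Finset.mem_filter.2
            ⟨Finset.mem_product.2 ⟨Finset.mem_range.2 hX, Finset.mem_range.2 hYb⟩, heven⟩,
            ?_, ?_⟩
          · show (2 * c + Y - colZ π X Y) / 2 ≠ 0
            rw [← edgeWt_sq_topE heven, Sym2.map_pair_eq]
            exact hWne
          · rfl
    · intro q hq hne
      exact (edgeWt_sq_topE (Finset.mem_filter.1 hq).2).symm
  have step2 : countP π = ∑ q ∈ Finset.range (2 * a) ×ˢ Finset.range (2 * b),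
      (if q.1 % 2 = q.2 % 2 then (if q.1 % 2 = 0 then (colZ π q.1 q.2 + 1) / 2
        else colZ π q.1 q.2 / 2) else 0) := by
    rw [countP, card_filter_eq_sum hY hB]
    apply Finset.sum_congr rfl
    intro q _
    exact count_parity q.1 q.2 (colZ π q.1 q.2)
  rw [step0, ← step1, step2, Finset.sum_filter, ← Finset.sum_add_distrib]
  apply Finset.sum_congr rfl
  intro q hq
  have hle := colZ_le hB q.1 q.2
  split_ifs <;> omega
lemma sum_ifpar (Y m a : ℕ) :
    ∑ X ∈ Finset.range (2 * a), (if (X + Y) % 2 = 0 then m else 0) = a * m := by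
  induction a with
  | zero => simp
  | succ n ih =>
    have h2 : 2 * (n + 1) = 2 * n + 1 + 1 := by ring
    have hm : (n + 1) * m = n * m + m := by ring
    rw [h2, Finset.sum_range_succ, Finset.sum_range_succ, ih, hm]
    split_ifs <;> omega

lemma sum_half (a c b : ℕ) :
    ∑ Y ∈ Finset.range (2 * b), (a * (c + Y / 2))
      = 2 * ∑ y ∈ Finset.range b, (a * (c + y)) := by
  induction b with
  | zero => simp
  | succ n ih =>
    have h2 : 2 * (n + 1) = 2 * n + 1 + 1 := by ring
    rw [h2, Finset.sum_range_succ, Finset.sum_range_succ, ih, Finset.sum_range_succ]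
    have e1 : (2 * n) / 2 = n := by omega
    have e2 : (2 * n + 1) / 2 = n := by omega
    rw [e1, e2]
    ring

lemma sumC2 (a b c : ℕ) :
    (∑ q ∈ Finset.range (2 * a) ×ˢ Finset.range (2 * b),
        (if (q.1 + q.2) % 2 = 0 then c + q.2 / 2 else 0))
      = 2 * ∑ q ∈ Finset.range a ×ˢ Finset.range b, (c + q.2) := by
  calc (∑ q ∈ Finset.range (2 * a) ×ˢ Finset.range (2 * b),
        (if (q.1 + q.2) % 2 = 0 then c + q.2 / 2 else 0))
      = ∑ X ∈ Finset.range (2 * a), ∑ Y ∈ Finset.range (2 * b),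
          (if (X + Y) % 2 = 0 then c + Y / 2 else 0) := Finset.sum_product _ _ _
    _ = ∑ Y ∈ Finset.range (2 * b), ∑ X ∈ Finset.range (2 * a),
          (if (X + Y) % 2 = 0 then c + Y / 2 else 0) := Finset.sum_comm
    _ = ∑ Y ∈ Finset.range (2 * b), a * (c + Y / 2) :=
          Finset.sum_congr rfl (fun Y _ => sum_ifpar Y (c + Y / 2) a)
    _ = 2 * ∑ y ∈ Finset.range b, a * (c + y) := sum_half a c b
    _ = 2 * (a * ∑ y ∈ Finset.range b, (c + y)) := by congr 1; rw [Finset.mul_sum]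
    _ = 2 * ∑ q ∈ Finset.range a ×ˢ Finset.range b, (c + q.2) := by
          rw [Finset.sum_product]
          congr 1
          simp [Finset.mul_sum]
/-- **Lemma 3 of the paper, gauge-free form.**  If the 2-factor
`Ψ(μ)` of a perfect matching `μ` of `H_{2a,2b,2c}` is the multiset union of
the two perfect matchings of `H_{a,b,c}` corresponding to 3D Young diagrams
`σ₁, σ₂ ⊆ B_{a,b,c}`, then `n_p(π(μ)) = |σ₁| + |σ₂|`, where `π(μ) ⊆ B_{2a,2b,2c}`
is the 3D Young diagram corresponding to `μ`. -/
theorem squish_p_weight (a b c : ℕ) (ha : 0 < a) (hb : 0 < b) (hc : 0 < c)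
    (σ₁ σ₂ : Finset (ℕ × ℕ × ℕ))
    (hσ₁ : IsYoungDiagram3D σ₁ ∧ InBox a b c σ₁)
    (hσ₂ : IsYoungDiagram3D σ₂ ∧ InBox a b c σ₂)
    (π : Finset (ℕ × ℕ × ℕ))
    (hπ : IsYoungDiagram3D π ∧ InBox (2 * a) (2 * b) (2 * c) π)
    (hΨ : ∀ E : Sym2 (HexV a b c),
      PsiCount a b c (matchingOf (2 * a) (2 * b) (2 * c) π) E =
        (if E ∈ (matchingOf a b c σ₁).edgeSet then 1 else 0) +
        (if E ∈ (matchingOf a b c σ₂).edgeSet then 1 else 0)) :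
    countP π = σ₁.card + σ₂.card := by
    classical
  have eqA1 := sumA ha hb hc hσ₁.1 hσ₁.2
  have eqA2 := sumA ha hb hc hσ₂.1 hσ₂.2
  have eqB := sumB hπ.1 hπ.2
  have eqC := sumC2 a b c
  have eqΨ : (∑ E : Sym2 (HexV a b c),
        edgeWt E * PsiCount a b c (matchingOf (2 * a) (2 * b) (2 * c) π) E)
      = (∑ E : Sym2 (HexV a b c),
          edgeWt E * (if E ∈ (matchingOf a b c σ₁).edgeSet then 1 else 0))
        + (∑ E : Sym2 (HexV a b c),
          edgeWt E * (if E ∈ (matchingOf a b c σ₂).edgeSet then 1 else 0)) := by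
    rw [← Finset.sum_add_distrib]
    apply Finset.sum_congr rfl
    intro E _
    rw [hΨ E, mul_add]
  omega
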